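/- arXiv:2108.00971 — 2 statements merged into one kernel-verified Lean document; each statement's English description precedes it below -/
import Mathlib

section
/- Let v₁, v₂, v₃ ∈ ℝ² be the vertices of a nondegenerate triangle (i.e., they are affinely independent), and let λ(x) = (λ₁(x), λ₂(x), λ₃(x)) denote the barycentric coordinates of a point x ∈ ℝ² with respect to this triangle. Then for every natural number d, the family of functions x ↦ ψ_{I,d}(λ(x)), indexed by multi-indices I=(i,j,k) with i+j+k=d, is a basis of the real vector space of polynomial functions on ℝ² of total degree at most d; in particular, every bivariate polynomial f of total degree at most d has a unique representation f(x) = Σ_{|I|=d} b_I ψ_{I,d}(λ(x)) with real Bézier ordinates b_I. -/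
open Finset

/-- The set of multi-indices `(i, j, k)` of natural numbers with `i + j + k = d`. -/
def triIdx (d : ℕ) : Finset (ℕ × ℕ × ℕ) :=
  (Finset.range (d + 1) ×ˢ Finset.range (d + 1) ×ˢ Finset.range (d + 1)).filter
    (fun I => I.1 + I.2.1 + I.2.2 = d)

/-- The bivariate Bernstein polynomial `ψ_{I,d}(ζ) = (d!/(i! j! k!)) ζ₁^i ζ₂^j ζ₃^k`. -/
noncomputable def bern (d : ℕ) (ζ₁ ζ₂ ζ₃ : ℝ) (I : ℕ × ℕ × ℕ) : ℝ :=
  (Nat.factorial d : ℝ) /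
    ((Nat.factorial I.1 : ℝ) * (Nat.factorial I.2.1 : ℝ) * (Nat.factorial I.2.2 : ℝ)) *
    ζ₁ ^ I.1 * ζ₂ ^ I.2.1 * ζ₃ ^ I.2.2

namespace BernAux
open MvPolynomial

noncomputable def coefB (d : ℕ) (I : ℕ × ℕ × ℕ) : ℝ :=
  (Nat.factorial d : ℝ) /
    ((Nat.factorial I.1 : ℝ) * (Nat.factorial I.2.1 : ℝ) * (Nat.factorial I.2.2 : ℝ))

lemma coefB_pos (d : ℕ) (I : ℕ × ℕ × ℕ) : 0 < coefB d I := by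
  unfold coefB
  positivity

lemma bern_eq (d : ℕ) (ζ₁ ζ₂ ζ₃ : ℝ) (I : ℕ × ℕ × ℕ) :
    bern d ζ₁ ζ₂ ζ₃ I = coefB d I * (ζ₁ ^ I.1 * ζ₂ ^ I.2.1 * ζ₃ ^ I.2.2) := by
  unfold bern coefB; ring

lemma mem_triIdx {d : ℕ} {I : ℕ × ℕ × ℕ} :
    I ∈ triIdx d ↔ I.1 + I.2.1 + I.2.2 = d := by
  unfold triIdx
  simp only [Finset.mem_filter, Finset.mem_product, Finset.mem_range]
  omega

/-- the family of Bernstein functions -/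
noncomputable def famF (d : ℕ) (lam : (Fin 2 → ℝ) → Fin 3 → ℝ) :
    {I // I ∈ triIdx d} → ((Fin 2 → ℝ) → ℝ) :=
  fun I => fun x => bern d (lam x 0) (lam x 1) (lam x 2) (I : ℕ × ℕ × ℕ)

/-- polynomial functions of degree ≤ d form a submodule -/
def polyFuns (d : ℕ) : Submodule ℝ ((Fin 2 → ℝ) → ℝ) where
  carrier := {f | ∃ p : MvPolynomial (Fin 2) ℝ,
    p.totalDegree ≤ d ∧ ∀ x, f x = MvPolynomial.eval x p}
  zero_mem' := ⟨0, by simp⟩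
  add_mem' := by
    rintro f g ⟨p, hp, hfp⟩ ⟨q, hq, hgq⟩
    exact ⟨p + q, le_trans (totalDegree_add p q) (max_le hp hq),
      fun x => by simp [hfp x, hgq x]⟩
  smul_mem' := by
    rintro c f ⟨p, hp, hfp⟩
    exact ⟨c • p, le_trans (totalDegree_smul_le c p) hp,
      fun x => by simp [hfp x, MvPolynomial.smul_eval]⟩

/-- barycentric coordinates are affine polynomials -/
lemma lam_poly (v : Fin 3 → (Fin 2 → ℝ)) (hv : AffineIndependent ℝ v)
    (lam : (Fin 2 → ℝ) → Fin 3 → ℝ)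
    (hlam : ∀ x : Fin 2 → ℝ, (∑ i, lam x i = 1) ∧ (∑ i, lam x i • v i = x)) :
    ∃ p : Fin 3 → MvPolynomial (Fin 2) ℝ,
      (∀ i, (p i).totalDegree ≤ 1) ∧ ∀ x i, lam x i = MvPolynomial.eval x (p i) := by
  have htop : affineSpan ℝ (Set.range v) = ⊤ := by
    rw [hv.affineSpan_eq_top_iff_card_eq_finrank_add_one]
    simp [Module.finrank_fintype_fun_eq_card]
  let b : AffineBasis (Fin 3) ℝ (Fin 2 → ℝ) := ⟨v, hv, htop⟩
  have hco : ∀ x i, lam x i = b.coord i x := by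
    intro x i
    have h1 := (hlam x).1
    have hb1 : ∑ i, b.coord i x = 1 := b.sum_coord_apply_eq_one x
    have key := (affineIndependent_iff_eq_of_fintype_affineCombination_eq ℝ v).1 hv
      (lam x) (fun i => b.coord i x) h1 hb1 ?_
    · exact congrFun key i
    · rw [Finset.affineCombination_eq_linear_combination _ _ _ h1, (hlam x).2]
      exact (b.affineCombination_coord_eq_self x).symm
  refine ⟨fun i => C (b.coord i 0) + ∑ j : Fin 2,
      C ((b.coord i).linear (fun k => if j = k then 1 else 0)) * X j, fun i => ?_, ?_⟩
  · refine le_trans (totalDegree_add _ _) (max_le (by simp) ?_)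
    refine le_trans (totalDegree_finset_sum _ _) (Finset.sup_le fun j _ => ?_)
    refine le_trans (totalDegree_mul _ _) ?_
    rw [totalDegree_C, totalDegree_X]
  · intro x i
    have hdec : b.coord i x = (b.coord i).linear x + b.coord i 0 := by
      have := congrFun (AffineMap.decomp (b.coord i)) x
      simpa using this
    have hL := LinearMap.pi_apply_eq_sum_univ (b.coord i).linear x
    rw [hco x i, hdec, hL]
    simp only [map_add, eval_C, map_sum, eval_mul, eval_X, smul_eq_mul]
    rw [Fin.sum_univ_two, Fin.sum_univ_two]
    ring

/-- each monomial function of degree ≤ d lies in the span of the Bernstein functions -/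
lemma mono_mem_span (d : ℕ) (v : Fin 3 → (Fin 2 → ℝ))
    (lam : (Fin 2 → ℝ) → Fin 3 → ℝ)
    (hlam : ∀ x : Fin 2 → ℝ, (∑ i, lam x i = 1) ∧ (∑ i, lam x i • v i = x))
    (a c : ℕ) (hac : a + c ≤ d) :
    (fun x : Fin 2 → ℝ => x 0 ^ a * x 1 ^ c) ∈
      Submodule.span ℝ (Set.range (famF d lam)) := by
  set q : MvPolynomial (Fin 3) ℝ :=
    (∑ i, C (v i 0) * X i) ^ a *
      ((∑ i, C (v i 1) * X i) ^ c * (∑ i, X i) ^ (d - a - c)) with hq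
  have hlin : ∀ s : Fin 2, (∑ i : Fin 3, (C (v i s) * X i : MvPolynomial (Fin 3) ℝ)).IsHomogeneous 1 :=
    fun s => IsHomogeneous.sum _ _ _ (fun i _ => by
      simpa using (isHomogeneous_C (Fin 3) (v i s)).mul (isHomogeneous_X ℝ i))
  have hlin3 : (∑ i : Fin 3, (X i : MvPolynomial (Fin 3) ℝ)).IsHomogeneous 1 :=
    IsHomogeneous.sum _ _ _ (fun i _ => isHomogeneous_X ℝ i)
  have hqh : q.IsHomogeneous d := by
    have h := ((hlin 0).pow a).mul (((hlin 1).pow c).mul (hlin3.pow (d - a - c)))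
    have he : 1 * a + (1 * c + 1 * (d - a - c)) = d := by omega
    rwa [he] at h
  have hq_eval : ∀ x, MvPolynomial.eval (lam x) q = x 0 ^ a * x 1 ^ c := by
    intro x
    have hs1 := (hlam x).1
    have hcoord : ∀ s : Fin 2, ∑ i : Fin 3, v i s * lam x i = x s := by
      intro s
      have h2 := congrFun (hlam x).2 s
      rw [Finset.sum_apply] at h2
      rw [← h2]
      exact Finset.sum_congr rfl fun i _ => by simp [mul_comm]
    simp only [hq, map_mul, map_pow, map_sum, eval_C, eval_X]
    rw [hcoord 0, hcoord 1, hs1, one_pow, mul_one]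
  have hmem : (fun x => MvPolynomial.eval (lam x) q) ∈
      Submodule.span ℝ (Set.range (famF d lam)) := by
    have hrw : (fun x => MvPolynomial.eval (lam x) q) =
        ∑ s ∈ q.support, (MvPolynomial.coeff s q) •
          (fun x : Fin 2 → ℝ => (lam x 0) ^ (s 0) * (lam x 1) ^ (s 1) * (lam x 2) ^ (s 2)) := by
      funext x
      rw [Finset.sum_apply]
      conv_lhs => rw [q.as_sum]
      rw [map_sum]
      refine Finset.sum_congr rfl fun s hs => ?_
      rw [eval_monomial, Finsupp.prod_fintype _ _ (fun i => pow_zero _), Fin.prod_univ_three]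
      simp [mul_assoc]
    rw [hrw]
    refine Submodule.sum_mem _ fun s hs => ?_
    have hsum : s 0 + s 1 + s 2 = d := by
      have h1 : Finsupp.weight 1 s = d := hqh (mem_support_iff.mp hs)
      have h2 : s.degree = d := by rw [Finsupp.degree_eq_weight_one]; exact h1
      have h3 : ∑ i : Fin 3, s i = s.degree :=
        (Finset.sum_subset (Finset.subset_univ _)
          (fun i _ hi => Finsupp.notMem_support_iff.mp hi)).symm
      rw [Fin.sum_univ_three] at h3
      omega
    have hI : ((s 0, s 1, s 2) : ℕ × ℕ × ℕ) ∈ triIdx d := mem_triIdx.mpr hsum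
    have hrw2 : (fun x : Fin 2 → ℝ => (lam x 0) ^ (s 0) * (lam x 1) ^ (s 1) * (lam x 2) ^ (s 2))
        = (coefB d (s 0, s 1, s 2))⁻¹ • famF d lam ⟨(s 0, s 1, s 2), hI⟩ := by
      funext x
      have hc := (coefB_pos d (s 0, s 1, s 2)).ne'
      simp only [famF, Pi.smul_apply, smul_eq_mul, bern_eq]
      field_simp
    rw [hrw2]
    exact Submodule.smul_mem _ _ (Submodule.smul_mem _ _
      (Submodule.subset_span (Set.mem_range_self _)))
  have : (fun x : Fin 2 → ℝ => x 0 ^ a * x 1 ^ c) = fun x => MvPolynomial.eval (lam x) q := by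
    funext x; rw [hq_eval]
  rw [this]
  exact hmem

/-- the evaluation linear map -/
noncomputable def evalLM : MvPolynomial (Fin 2) ℝ →ₗ[ℝ] ((Fin 2 → ℝ) → ℝ) where
  toFun p := fun x => MvPolynomial.eval x p
  map_add' p q := funext fun x => by simp
  map_smul' r p := funext fun x => by simp [MvPolynomial.smul_eval]

lemma evalLM_inj : Function.Injective evalLM := fun p q h =>
  MvPolynomial.funext (fun x => congrFun h x)

/-- each Bernstein function belongs to polyFuns -/
lemma fam_mem_polyFuns (d : ℕ) (v : Fin 3 → (Fin 2 → ℝ)) (hv : AffineIndependent ℝ v)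
    (lam : (Fin 2 → ℝ) → Fin 3 → ℝ)
    (hlam : ∀ x : Fin 2 → ℝ, (∑ i, lam x i = 1) ∧ (∑ i, lam x i • v i = x))
    (I : {I // I ∈ triIdx d}) : famF d lam I ∈ polyFuns d := by
  obtain ⟨p, hdeg, hpe⟩ := lam_poly v hv lam hlam
  obtain ⟨⟨i, j, k⟩, hI⟩ := I
  have hijk : i + j + k = d := mem_triIdx.mp hI
  refine ⟨C (coefB d (i, j, k)) * (p 0 ^ i * (p 1 ^ j * p 2 ^ k)), ?_, ?_⟩
  · calc (C (coefB d (i, j, k)) * (p 0 ^ i * (p 1 ^ j * p 2 ^ k))).totalDegree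
        ≤ (C (coefB d (i, j, k)) : MvPolynomial (Fin 2) ℝ).totalDegree +
            (p 0 ^ i * (p 1 ^ j * p 2 ^ k)).totalDegree := totalDegree_mul _ _
      _ ≤ 0 + ((p 0 ^ i).totalDegree + ((p 1 ^ j).totalDegree + (p 2 ^ k).totalDegree)) := by
          refine add_le_add (by simp) (le_trans (totalDegree_mul _ _)
            (add_le_add le_rfl (totalDegree_mul _ _)))
      _ ≤ 0 + (i * 1 + (j * 1 + k * 1)) := by
          refine add_le_add le_rfl (add_le_add
            (le_trans (totalDegree_pow _ _) (Nat.mul_le_mul_left _ (hdeg 0)))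
            (add_le_add
              (le_trans (totalDegree_pow _ _) (Nat.mul_le_mul_left _ (hdeg 1)))
              (le_trans (totalDegree_pow _ _) (Nat.mul_le_mul_left _ (hdeg 2)))))
      _ ≤ d := by omega
  · intro x
    simp only [famF, bern_eq, map_mul, map_pow, eval_C]
    rw [← hpe x 0, ← hpe x 1, ← hpe x 2]
    ring

end BernAux
namespace BernAux
open MvPolynomial

/-- the span of the Bernstein functions is exactly polyFuns d -/
lemma span_eq (d : ℕ) (v : Fin 3 → (Fin 2 → ℝ)) (hv : AffineIndependent ℝ v)
    (lam : (Fin 2 → ℝ) → Fin 3 → ℝ)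
    (hlam : ∀ x : Fin 2 → ℝ, (∑ i, lam x i = 1) ∧ (∑ i, lam x i • v i = x)) :
    Submodule.span ℝ (Set.range (famF d lam)) = polyFuns d := by
  refine le_antisymm ?_ ?_
  · rw [Submodule.span_le]
    rintro _ ⟨I, rfl⟩
    exact fam_mem_polyFuns d v hv lam hlam I
  · rintro f ⟨p, hpd, hfp⟩
    have hf : f = fun x => MvPolynomial.eval x p := funext hfp
    rw [hf]
    have hrw : (fun x => MvPolynomial.eval x p) =
        ∑ s ∈ p.support, (MvPolynomial.coeff s p) •
          (fun x : Fin 2 → ℝ => x 0 ^ (s 0) * x 1 ^ (s 1)) := by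
      funext x
      rw [Finset.sum_apply]
      conv_lhs => rw [p.as_sum]
      rw [map_sum]
      refine Finset.sum_congr rfl fun s hs => ?_
      rw [eval_monomial, Finsupp.prod_fintype _ _ (fun i => pow_zero _), Fin.prod_univ_two]
      simp
    rw [hrw]
    refine Submodule.sum_mem _ fun s hs => Submodule.smul_mem _ _ ?_
    have hle : s 0 + s 1 ≤ d := by
      have h1 := MvPolynomial.le_totalDegree hs
      have h2 : (s.sum fun _ e => e) = ∑ i : Fin 2, s i :=
        Finsupp.sum_fintype _ _ (fun i => rfl)
      rw [h2, Fin.sum_univ_two] at h1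
      omega
    exact mono_mem_span d v lam hlam (s 0) (s 1) hle

def Eidx (d : ℕ) : Finset (ℕ × ℕ) :=
  (Finset.range (d + 1) ×ˢ Finset.range (d + 1)).filter (fun p => p.1 + p.2 ≤ d)

lemma mem_Eidx {d : ℕ} {p : ℕ × ℕ} : p ∈ Eidx d ↔ p.1 + p.2 ≤ d := by
  unfold Eidx
  simp only [Finset.mem_filter, Finset.mem_product, Finset.mem_range]
  omega

lemma card_Eidx (d : ℕ) : (Eidx d).card = (triIdx d).card := by
  refine Finset.card_bij (fun p _ => (p.1, p.2, d - p.1 - p.2)) ?_ ?_ ?_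
  · intro p hp
    rw [mem_Eidx] at hp
    rw [mem_triIdx]
    simp only
    omega
  · intro p hp q hq h
    rw [Prod.mk.injEq, Prod.mk.injEq] at h
    exact Prod.ext h.1 h.2.1
  · intro I hI
    rw [mem_triIdx] at hI
    obtain ⟨a, b, c⟩ := I
    refine ⟨(a, b), mem_Eidx.mpr (by simp only at hI ⊢; omega), ?_⟩
    simp only [Prod.mk.injEq] at hI ⊢
    exact ⟨trivial, trivial, by omega⟩

/-- the monomial functions indexed by Eidx d are linearly independent -/
lemma monfun_li (d : ℕ) : LinearIndependent ℝ
    (fun p : {p // p ∈ Eidx d} =>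
      (fun x : Fin 2 → ℝ => x 0 ^ (p : ℕ × ℕ).1 * x 1 ^ (p : ℕ × ℕ).2)) := by
  set fs : {p // p ∈ Eidx d} → (Fin 2 →₀ ℕ) :=
    fun p => Finsupp.equivFunOnFinite.symm ![(p : ℕ × ℕ).1, (p : ℕ × ℕ).2] with hfs
  have hfsinj : Function.Injective fs := by
    intro p q h
    have h0 : ((fs p : Fin 2 →₀ ℕ) : Fin 2 → ℕ) = ((fs q : Fin 2 →₀ ℕ) : Fin 2 → ℕ) := by
      rw [h]
    have h1 := congrFun h0 0
    have h2 := congrFun h0 1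
    simp only [hfs, Finsupp.coe_equivFunOnFinite_symm, Matrix.cons_val_zero,
      Matrix.cons_val_one, Matrix.head_cons] at h1 h2
    exact Subtype.ext (Prod.ext h1 h2)
  have hbli := ((MvPolynomial.basisMonomials (Fin 2) ℝ).linearIndependent.comp fs hfsinj).map'
    evalLM (LinearMap.ker_eq_bot.mpr evalLM_inj)
  have hEq : (⇑evalLM ∘ (⇑(MvPolynomial.basisMonomials (Fin 2) ℝ) ∘ fs)) =
      (fun p : {p // p ∈ Eidx d} =>
        (fun x : Fin 2 → ℝ => x 0 ^ (p : ℕ × ℕ).1 * x 1 ^ (p : ℕ × ℕ).2)) := by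
    funext p
    funext x
    simp only [Function.comp_apply, MvPolynomial.coe_basisMonomials]
    show MvPolynomial.eval x (monomial (fs p) 1) = _
    rw [eval_monomial, Finsupp.prod_fintype _ _ (fun i => pow_zero _), Fin.prod_univ_two]
    simp [hfs]
  rwa [hEq] at hbli

end BernAux

section Main
open BernAux MvPolynomial


/-- Given a nondegenerate triangle `v 0, v 1, v 2` in the plane with barycentric
coordinate functions `lam`, the Bernstein polynomials of degree `d` composed with the
barycentric coordinates form a basis of the space of polynomial functions of total
degree at most `d`: they are linearly independent, their span is exactly the set of
functions given by evaluation of a polynomial of total degree at most `d`, and every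
such polynomial function has a unique representation with Bézier ordinates `b`. -/
theorem bernstein_basis_of_polynomials (d : ℕ) (v : Fin 3 → (Fin 2 → ℝ))
    (hv : AffineIndependent ℝ v)
    (lam : (Fin 2 → ℝ) → Fin 3 → ℝ)
    (hlam : ∀ x : Fin 2 → ℝ, (∑ i, lam x i = 1) ∧ (∑ i, lam x i • v i = x)) :
    LinearIndependent ℝ
      (fun I : triIdx d =>
        (fun x => bern d (lam x 0) (lam x 1) (lam x 2) (I : ℕ × ℕ × ℕ) :
          (Fin 2 → ℝ) → ℝ)) ∧
    ((Submodule.span ℝ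
        (Set.range (fun I : triIdx d =>
          (fun x => bern d (lam x 0) (lam x 1) (lam x 2) (I : ℕ × ℕ × ℕ) :
            (Fin 2 → ℝ) → ℝ))) : Set ((Fin 2 → ℝ) → ℝ)) =
      {f : (Fin 2 → ℝ) → ℝ | ∃ p : MvPolynomial (Fin 2) ℝ,
        p.totalDegree ≤ d ∧ ∀ x, f x = MvPolynomial.eval x p}) ∧
    (∀ p : MvPolynomial (Fin 2) ℝ, p.totalDegree ≤ d →
      ∃! b : triIdx d → ℝ, ∀ x : Fin 2 → ℝ,
        MvPolynomial.eval x p =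
          ∑ I : triIdx d, b I * bern d (lam x 0) (lam x 1) (lam x 2) (I : ℕ × ℕ × ℕ)) := by
  have hspan : Submodule.span ℝ (Set.range (famF d lam)) = polyFuns d :=
    span_eq d v hv lam hlam
  set M := Submodule.span ℝ (Set.range (famF d lam)) with hM
  haveI : FiniteDimensional ℝ M :=
    FiniteDimensional.span_of_finite ℝ (Set.finite_range (famF d lam))
  -- finrank bounds
  have hmonle : Submodule.span ℝ (Set.range
      (fun p : {p // p ∈ Eidx d} =>
        (fun x : Fin 2 → ℝ => x 0 ^ (p : ℕ × ℕ).1 * x 1 ^ (p : ℕ × ℕ).2))) ≤ M := by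
    rw [Submodule.span_le]
    rintro _ ⟨p, rfl⟩
    exact mono_mem_span d v lam hlam _ _ (mem_Eidx.mp p.2)
  have hfr1 : (Eidx d).card ≤ Module.finrank ℝ M := by
    have h1 := finrank_span_eq_card (monfun_li d)
    have h2 := Submodule.finrank_mono hmonle
    rw [h1, Fintype.card_coe] at h2
    exact h2
  have hfr2 : Module.finrank ℝ M ≤ (triIdx d).card := by
    have := finrank_range_le_card (R := ℝ) (famF d lam)
    simp only [Set.finrank, Fintype.card_coe] at this
    exact this
  have hfr : Module.finrank ℝ M = (triIdx d).card :=
    le_antisymm hfr2 (by rw [← card_Eidx d]; exact hfr1)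
  -- linear independence
  have hind : LinearIndependent ℝ (famF d lam) := by
    set g : {I // I ∈ triIdx d} → M :=
      fun I => ⟨famF d lam I, Submodule.subset_span (Set.mem_range_self I)⟩ with hg
    have hmap : Submodule.map M.subtype (Submodule.span ℝ (Set.range g)) =
        Submodule.map M.subtype ⊤ := by
      rw [Submodule.map_span, Submodule.map_subtype_top]
      congr 1
      rw [← Set.range_comp]
      rfl
    have htop : Submodule.span ℝ (Set.range g) = ⊤ :=
      Submodule.map_injective_of_injective (Submodule.injective_subtype M) hmap
    have hgi : LinearIndependent ℝ g :=
      linearIndependent_of_top_le_span_of_card_eq_finrank htop.ge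
        (by rw [Fintype.card_coe, ← hfr])
    have := hgi.map' M.subtype (Submodule.ker_subtype M)
    exact this
  refine ⟨hind, ?_, ?_⟩
  · show (↑M : Set ((Fin 2 → ℝ) → ℝ)) = _
    rw [hspan]
    rfl
  · intro p hp
    have hmem : (fun x => MvPolynomial.eval x p) ∈ M := by
      rw [hspan]
      exact ⟨p, hp, fun _ => rfl⟩
    rw [hM, Submodule.mem_span_range_iff_exists_fun ℝ] at hmem
    obtain ⟨c, hc⟩ := hmem
    refine ⟨c, fun x => ?_, fun b hb => ?_⟩
    · have := congrFun hc x
      rw [Finset.sum_apply] at this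
      simp only [Pi.smul_apply, smul_eq_mul] at this
      exact this.symm
    · have hzero : ∑ I, (b I - c I) • famF d lam I = 0 := by
        funext x
        rw [Finset.sum_apply]
        simp only [Pi.smul_apply, smul_eq_mul, sub_mul, Pi.zero_apply]
        rw [Finset.sum_sub_distrib]
        have h1 := hb x
        have h2 := congrFun hc x
        rw [Finset.sum_apply] at h2
        simp only [Pi.smul_apply, smul_eq_mul] at h2
        show (∑ I : {I // I ∈ triIdx d}, b I * bern d (lam x 0) (lam x 1) (lam x 2) (I : ℕ × ℕ × ℕ)) -
          (∑ I : {I // I ∈ triIdx d}, c I * famF d lam I x) = 0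
        rw [← h1, h2]
        ring
      have := Fintype.linearIndependent_iff.mp hind _ hzero
      funext I
      have hI := this I
      linarith [hI]
end Main
end

section
/- Let u, v, w : ℝ² → ℝ be smooth functions, with v and w compactly supported. Then the trilinear integral of the von Karman bracket is symmetric under exchanging the last two arguments: ∫_{ℝ²} [u, v] w dx = ∫_{ℝ²} [u, w] v dx. -/
open MeasureTheory

/-- Partial derivative of `f : ℝ × ℝ → ℝ` in the `x` direction. -/
noncomputable def pdx (f : ℝ × ℝ → ℝ) (z : ℝ × ℝ) : ℝ :=
  fderiv ℝ f z (1, 0)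

/-- Partial derivative of `f : ℝ × ℝ → ℝ` in the `y` direction. -/
noncomputable def pdy (f : ℝ × ℝ → ℝ) (z : ℝ × ℝ) : ℝ :=
  fderiv ℝ f z (0, 1)

/-- The von Karman bracket `[u, v] = u_xx v_yy + u_yy v_xx − 2 u_xy v_xy`. -/
noncomputable def vkBracket (u v : ℝ × ℝ → ℝ) (z : ℝ × ℝ) : ℝ :=
  pdx (pdx u) z * pdy (pdy v) z + pdy (pdy u) z * pdx (pdx v) z -
    2 * pdx (pdy u) z * pdx (pdy v) z

lemma ContDiff.pdx' {f : ℝ × ℝ → ℝ} (hf : ContDiff ℝ (⊤ : ℕ∞) f) :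
    ContDiff ℝ (⊤ : ℕ∞) (pdx f) :=
  (hf.fderiv_right (by norm_cast)).clm_apply contDiff_const

lemma ContDiff.pdy' {f : ℝ × ℝ → ℝ} (hf : ContDiff ℝ (⊤ : ℕ∞) f) :
    ContDiff ℝ (⊤ : ℕ∞) (pdy f) :=
  (hf.fderiv_right (by norm_cast)).clm_apply contDiff_const

lemma pdx_mul {f g : ℝ × ℝ → ℝ} {z : ℝ × ℝ} (hf : DifferentiableAt ℝ f z)
    (hg : DifferentiableAt ℝ g z) :
    pdx (fun z => f z * g z) z = pdx f z * g z + f z * pdx g z := by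
  unfold pdx
  rw [fderiv_fun_mul hf hg]
  simp
  ring

lemma pdy_mul {f g : ℝ × ℝ → ℝ} {z : ℝ × ℝ} (hf : DifferentiableAt ℝ f z)
    (hg : DifferentiableAt ℝ g z) :
    pdy (fun z => f z * g z) z = pdy f z * g z + f z * pdy g z := by
  unfold pdy
  rw [fderiv_fun_mul hf hg]
  simp
  ring

lemma pdx_sub {f g : ℝ × ℝ → ℝ} {z : ℝ × ℝ} (hf : DifferentiableAt ℝ f z)
    (hg : DifferentiableAt ℝ g z) :
    pdx (fun z => f z - g z) z = pdx f z - pdx g z := by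
  unfold pdx
  rw [fderiv_fun_sub hf hg]
  simp

lemma pdy_sub {f g : ℝ × ℝ → ℝ} {z : ℝ × ℝ} (hf : DifferentiableAt ℝ f z)
    (hg : DifferentiableAt ℝ g z) :
    pdy (fun z => f z - g z) z = pdy f z - pdy g z := by
  unfold pdy
  rw [fderiv_fun_sub hf hg]
  simp

lemma pdx_pdy_comm {f : ℝ × ℝ → ℝ} (hf : ContDiff ℝ (⊤ : ℕ∞) f) (z : ℝ × ℝ) :
    pdx (pdy f) z = pdy (pdx f) z := by
  have hd : DifferentiableAt ℝ (fderiv ℝ f) z :=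
    ((hf.fderiv_right (m := (⊤ : ℕ∞)) (by norm_cast)).differentiable (by simp)) z
  have h1 : pdx (pdy f) z = fderiv ℝ (fderiv ℝ f) z (1, 0) (0, 1) := by
    unfold pdx pdy
    rw [fderiv_clm_apply hd (differentiableAt_const _)]
    simp
  have h2 : pdy (pdx f) z = fderiv ℝ (fderiv ℝ f) z (0, 1) (1, 0) := by
    unfold pdx pdy
    rw [fderiv_clm_apply hd (differentiableAt_const _)]
    simp
  rw [h1, h2]
  exact (hf.contDiffAt.isSymmSndFDerivAt (by simp; exact WithTop.coe_le_coe.mpr le_top)) _ _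

lemma integral_deriv_eq_zero1 {f : ℝ → ℝ} (hf : ContDiff ℝ 1 f) (hsupp : HasCompactSupport f) :
    ∫ x, deriv f x = 0 := by
  have hcont : Continuous (deriv f) := hf.continuous_deriv le_rfl
  have hint : Integrable (deriv f) := hcont.integrable_of_hasCompactSupport hsupp.deriv
  have h := intervalIntegral.integral_Iic_add_Ioi (b := (0:ℝ)) hint.integrableOn hint.integrableOn
  rw [← h, hsupp.integral_Iic_deriv_eq hf 0, hsupp.integral_Ioi_deriv_eq hf 0]
  ring

lemma hasDerivAt_slice_x {f : ℝ × ℝ → ℝ} (hf : ContDiff ℝ (⊤ : ℕ∞) f) (x y : ℝ) :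
    HasDerivAt (fun x => f (x, y)) (pdx f (x, y)) x := by
  have h1 : HasDerivAt (fun x : ℝ => ((x : ℝ), y)) ((1 : ℝ), (0 : ℝ)) x :=
    (hasDerivAt_id x).prodMk (hasDerivAt_const x y)
  have h2 : HasFDerivAt f (fderiv ℝ f (x, y)) (x, y) :=
    (hf.differentiable (by simp) (x, y)).hasFDerivAt
  exact h2.comp_hasDerivAt x h1

lemma hasDerivAt_slice_y {f : ℝ × ℝ → ℝ} (hf : ContDiff ℝ (⊤ : ℕ∞) f) (x y : ℝ) :
    HasDerivAt (fun y => f (x, y)) (pdy f (x, y)) y := by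
  have h1 : HasDerivAt (fun y : ℝ => ((x : ℝ), y)) ((0 : ℝ), (1 : ℝ)) y :=
    (hasDerivAt_const y x).prodMk (hasDerivAt_id y)
  have h2 : HasFDerivAt f (fderiv ℝ f (x, y)) (x, y) :=
    (hf.differentiable (by simp) (x, y)).hasFDerivAt
  exact h2.comp_hasDerivAt y h1

lemma slice_contDiff_x {f : ℝ × ℝ → ℝ} (hf : ContDiff ℝ (⊤ : ℕ∞) f) (y : ℝ) :
    ContDiff ℝ 1 (fun x => f (x, y)) :=
  (hf.comp (contDiff_id.prodMk contDiff_const)).of_le (by exact_mod_cast le_top)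

lemma slice_contDiff_y {f : ℝ × ℝ → ℝ} (hf : ContDiff ℝ (⊤ : ℕ∞) f) (x : ℝ) :
    ContDiff ℝ 1 (fun y => f (x, y)) :=
  (hf.comp (contDiff_const.prodMk contDiff_id)).of_le (by exact_mod_cast le_top)

lemma slice_compactSupport_x {f : ℝ × ℝ → ℝ} (hsupp : HasCompactSupport f) (y : ℝ) :
    HasCompactSupport (fun x => f (x, y)) := by
  apply HasCompactSupport.intro (hsupp.image continuous_fst)
  intro x hx
  apply image_eq_zero_of_notMem_tsupport
  intro hmem
  exact hx ⟨(x, y), hmem, rfl⟩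

lemma slice_compactSupport_y {f : ℝ × ℝ → ℝ} (hsupp : HasCompactSupport f) (x : ℝ) :
    HasCompactSupport (fun y => f (x, y)) := by
  apply HasCompactSupport.intro (hsupp.image continuous_snd)
  intro y hy
  apply image_eq_zero_of_notMem_tsupport
  intro hmem
  exact hy ⟨(x, y), hmem, rfl⟩

lemma pdx_compactSupport {f : ℝ × ℝ → ℝ} (hsupp : HasCompactSupport f) :
    HasCompactSupport (pdx f) :=
  hsupp.fderiv_apply (𝕜 := ℝ) (1, 0)

lemma pdy_compactSupport {f : ℝ × ℝ → ℝ} (hsupp : HasCompactSupport f) :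
    HasCompactSupport (pdy f) :=
  hsupp.fderiv_apply (𝕜 := ℝ) (0, 1)

lemma integral_pdy_eq_zero {f : ℝ × ℝ → ℝ} (hf : ContDiff ℝ (⊤ : ℕ∞) f)
    (hsupp : HasCompactSupport f) : ∫ z : ℝ × ℝ, pdy f z = 0 := by
  have hint : Integrable (pdy f) :=
    hf.pdy'.continuous.integrable_of_hasCompactSupport (pdy_compactSupport hsupp)
  rw [MeasureTheory.Measure.volume_eq_prod] at hint ⊢
  rw [MeasureTheory.integral_prod _ hint]
  have h0 : ∀ x : ℝ, (∫ y : ℝ, pdy f (x, y)) = 0 := by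
    intro x
    have he : (fun y : ℝ => pdy f (x, y)) = deriv (fun y => f (x, y)) := by
      funext y
      exact (hasDerivAt_slice_y hf x y).deriv.symm
    rw [he]
    exact integral_deriv_eq_zero1 (slice_contDiff_y hf x) (slice_compactSupport_y hsupp x)
  simp [h0]

lemma integral_pdx_eq_zero {f : ℝ × ℝ → ℝ} (hf : ContDiff ℝ (⊤ : ℕ∞) f)
    (hsupp : HasCompactSupport f) : ∫ z : ℝ × ℝ, pdx f z = 0 := by
  have hint : Integrable (pdx f) :=
    hf.pdx'.continuous.integrable_of_hasCompactSupport (pdx_compactSupport hsupp)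
  rw [MeasureTheory.Measure.volume_eq_prod] at hint ⊢
  rw [MeasureTheory.integral_prod _ hint]
  rw [MeasureTheory.integral_integral_swap (f := fun x y => pdx f (x, y)) hint]
  have h0 : ∀ y : ℝ, (∫ x : ℝ, pdx f (x, y)) = 0 := by
    intro y
    have he : (fun x : ℝ => pdx f (x, y)) = deriv (fun x => f (x, y)) := by
      funext x
      exact (hasDerivAt_slice_x hf x y).deriv.symm
    rw [he]
    exact integral_deriv_eq_zero1 (slice_contDiff_x hf y) (slice_compactSupport_x hsupp y)
  simp [h0]

lemma ContDiff.dAt {f : ℝ × ℝ → ℝ} (hf : ContDiff ℝ (⊤ : ℕ∞) f) (z : ℝ × ℝ) :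
    DifferentiableAt ℝ f z :=
  hf.differentiable (by simp) z

lemma hcs_sub {f g : ℝ × ℝ → ℝ} (hf : HasCompactSupport f) (hg : HasCompactSupport g) :
    HasCompactSupport (fun z => f z - g z) := by
  apply HasCompactSupport.intro (hf.union hg)
  intro z hz
  rw [image_eq_zero_of_notMem_tsupport (fun h => hz (Set.mem_union_left _ h)),
    image_eq_zero_of_notMem_tsupport (fun h => hz (Set.mem_union_right _ h)), sub_zero]


/-- For smooth `u, v, w` with `v` and `w` compactly supported, the trilinear integral
of the von Karman bracket is symmetric under exchanging the last two arguments: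
`∫ [u, v] w = ∫ [u, w] v`. -/
theorem vonKarman_trilinear_symm
    (u v w : ℝ × ℝ → ℝ)
    (hu : ContDiff ℝ (⊤ : ℕ∞) u) (hv : ContDiff ℝ (⊤ : ℕ∞) v)
    (hw : ContDiff ℝ (⊤ : ℕ∞) w)
    (hv' : HasCompactSupport v) (hw' : HasCompactSupport w) :
    ∫ z : ℝ × ℝ, vkBracket u v z * w z = ∫ z : ℝ × ℝ, vkBracket u w z * v z := by
  -- the auxiliary vector field
  set A : ℝ × ℝ → ℝ := fun z => pdx v z * w z - v z * pdx w z with hAdef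
  set B : ℝ × ℝ → ℝ := fun z => pdy v z * w z - v z * pdy w z with hBdef
  set F1 : ℝ × ℝ → ℝ := fun z => pdy (pdy u) z * A z - pdx (pdy u) z * B z with hF1def
  set F2 : ℝ × ℝ → ℝ := fun z => pdx (pdx u) z * B z - pdx (pdy u) z * A z with hF2def
  -- smoothness
  have hAs : ContDiff ℝ (⊤ : ℕ∞) A := (hv.pdx'.mul hw).sub (hv.mul hw.pdx')
  have hBs : ContDiff ℝ (⊤ : ℕ∞) B := (hv.pdy'.mul hw).sub (hv.mul hw.pdy')
  have hF1s : ContDiff ℝ (⊤ : ℕ∞) F1 := (hu.pdy'.pdy'.mul hAs).sub ((hu.pdy'.pdx').mul hBs)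
  have hF2s : ContDiff ℝ (⊤ : ℕ∞) F2 := (hu.pdx'.pdx'.mul hBs).sub ((hu.pdy'.pdx').mul hAs)
  -- compact supports
  have hAc : HasCompactSupport A :=
    hcs_sub (hw'.mul_left) ((pdx_compactSupport hw').mul_left)
  have hBc : HasCompactSupport B :=
    hcs_sub (hw'.mul_left) ((pdy_compactSupport hw').mul_left)
  have hF1c : HasCompactSupport F1 := hcs_sub (hAc.mul_left) (hBc.mul_left)
  have hF2c : HasCompactSupport F2 := hcs_sub (hBc.mul_left) (hAc.mul_left)
  -- derivatives of A and B
  have hAx : ∀ z, pdx A z = pdx (pdx v) z * w z - v z * pdx (pdx w) z := by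
    intro z
    rw [hAdef, pdx_sub ((hv.pdx'.mul hw).dAt z) ((hv.mul hw.pdx').dAt z),
      pdx_mul (hv.pdx'.dAt z) (hw.dAt z), pdx_mul (hv.dAt z) (hw.pdx'.dAt z)]
    ring
  have hBy : ∀ z, pdy B z = pdy (pdy v) z * w z - v z * pdy (pdy w) z := by
    intro z
    rw [hBdef, pdy_sub ((hv.pdy'.mul hw).dAt z) ((hv.mul hw.pdy').dAt z),
      pdy_mul (hv.pdy'.dAt z) (hw.dAt z), pdy_mul (hv.dAt z) (hw.pdy'.dAt z)]
    ring
  have hBx : ∀ z, pdx B z = pdx (pdy v) z * w z + pdy v z * pdx w z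
      - pdx v z * pdy w z - v z * pdx (pdy w) z := by
    intro z
    rw [hBdef, pdx_sub ((hv.pdy'.mul hw).dAt z) ((hv.mul hw.pdy').dAt z),
      pdx_mul (hv.pdy'.dAt z) (hw.dAt z), pdx_mul (hv.dAt z) (hw.pdy'.dAt z)]
    ring
  have hAy : ∀ z, pdy A z = pdy (pdx v) z * w z + pdx v z * pdy w z
      - pdy v z * pdx w z - v z * pdy (pdx w) z := by
    intro z
    rw [hAdef, pdy_sub ((hv.pdx'.mul hw).dAt z) ((hv.mul hw.pdx').dAt z),
      pdy_mul (hv.pdx'.dAt z) (hw.dAt z), pdy_mul (hv.dAt z) (hw.pdx'.dAt z)]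
    ring
  -- Clairaut identities
  have cu : pdx (pdy u) = pdy (pdx u) := funext (pdx_pdy_comm hu)
  have cv : pdx (pdy v) = pdy (pdx v) := funext (pdx_pdy_comm hv)
  have cw : pdx (pdy w) = pdy (pdx w) := funext (pdx_pdy_comm hw)
  have cux : pdx (pdy (pdx u)) = pdy (pdx (pdx u)) := funext (pdx_pdy_comm hu.pdx')
  have cuy : pdx (pdy (pdy u)) = pdy (pdx (pdy u)) := funext (pdx_pdy_comm hu.pdy')
  -- the pointwise divergence identity
  have hkey : ∀ z, vkBracket u v z * w z - vkBracket u w z * v z = pdx F1 z + pdy F2 z := by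
    intro z
    rw [hF1def, hF2def,
      pdx_sub ((hu.pdy'.pdy'.mul hAs).dAt z) (((hu.pdy'.pdx').mul hBs).dAt z),
      pdx_mul (hu.pdy'.pdy'.dAt z) (hAs.dAt z), pdx_mul ((hu.pdy'.pdx').dAt z) (hBs.dAt z),
      pdy_sub ((hu.pdx'.pdx'.mul hBs).dAt z) (((hu.pdy'.pdx').mul hAs).dAt z),
      pdy_mul (hu.pdx'.pdx'.dAt z) (hBs.dAt z), pdy_mul ((hu.pdy'.pdx').dAt z) (hAs.dAt z)]
    rw [hAx z, hAy z, hBx z, hBy z]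
    rw [cu, cux, cuy, cu, cv, cw]
    rw [hAdef, hBdef]
    unfold vkBracket
    rw [cu, cv, cw]
    ring
  -- integrability of the two integrands
  have hvks : ∀ (p : ℝ × ℝ → ℝ), ContDiff ℝ (⊤ : ℕ∞) p →
      ContDiff ℝ (⊤ : ℕ∞) (vkBracket u p) := by
    intro p hp
    unfold vkBracket
    exact ((hu.pdx'.pdx'.mul hp.pdy'.pdy').add (hu.pdy'.pdy'.mul hp.pdx'.pdx')).sub
      ((contDiff_const.mul (hu.pdy'.pdx')).mul (hp.pdy'.pdx'))
  have hint1 : Integrable (fun z => vkBracket u v z * w z) :=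
    (((hvks v hv).mul hw).continuous).integrable_of_hasCompactSupport hw'.mul_left
  have hint2 : Integrable (fun z => vkBracket u w z * v z) :=
    (((hvks w hw).mul hv).continuous).integrable_of_hasCompactSupport hv'.mul_left
  have hintF1 : Integrable (pdx F1) :=
    hF1s.pdx'.continuous.integrable_of_hasCompactSupport (pdx_compactSupport hF1c)
  have hintF2 : Integrable (pdy F2) :=
    hF2s.pdy'.continuous.integrable_of_hasCompactSupport (pdy_compactSupport hF2c)
  rw [← sub_eq_zero, ← MeasureTheory.integral_sub hint1 hint2]
  calc ∫ z : ℝ × ℝ, (vkBracket u v z * w z - vkBracket u w z * v z)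
      = ∫ z : ℝ × ℝ, (pdx F1 z + pdy F2 z) := by
        exact MeasureTheory.integral_congr_ae (Filter.Eventually.of_forall hkey)
    _ = (∫ z : ℝ × ℝ, pdx F1 z) + ∫ z : ℝ × ℝ, pdy F2 z :=
        MeasureTheory.integral_add hintF1 hintF2
    _ = 0 := by
        rw [integral_pdx_eq_zero hF1s hF1c, integral_pdy_eq_zero hF2s hF2c, add_zero]
end
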